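/- Let n₁, n₂, n₃ ∈ ℝ all be nonzero (Bianchi types VIII and IX, the mixmaster models). Let M be the 6×6 Cartan matrix M_{ij} = −c_j⟨a_i,a_j⟩ of the vacuum Bianchi class A models with ⟨x,y⟩ = −x₁y₁+x₂y₂+x₃y₃, a₁=(4,−8,0), a₂=(4,4,4√3), a₃=(4,4,−4√3), a₄=(4,4,0), a₅=(4,−2,2√3), a₆=(4,−2,−2√3), c=(n₁², n₂², n₃², −2n₁n₂, −2n₂n₃, −2n₁n₃). Then for a pair i < j the 2×2 block matrix M̂_{ij} = [[M_{ii}, M_{ij}],[M_{ji}, M_{jj}]] is nondegenerate (M_{ii}M_{jj} − M_{ij}M_{ji} ≠ 0) if and only if (i,j) is one of the six pairs (1,4), (2,6), (3,5), (4,5), (4,6), (5,6). -/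

import Mathlib

/-- The Lorentzian scalar product `⟨x,y⟩ = -x₁y₁ + x₂y₂ + x₃y₃` on `ℝ³`. -/
noncomputable def lorentzProd (x y : Fin 3 → ℝ) : ℝ :=
  -(x 0 * y 0) + x 1 * y 1 + x 2 * y 2

/-- The six vectors `a₁,…,a₆` of the vacuum Bianchi class A Toda lattice. -/
noncomputable def bianchiVec : Fin 6 → Fin 3 → ℝ :=
  ![![4, -8, 0],
    ![4, 4, 4 * Real.sqrt 3],
    ![4, 4, -4 * Real.sqrt 3],
    ![4, 4, 0],
    ![4, -2, 2 * Real.sqrt 3],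
    ![4, -2, -2 * Real.sqrt 3]]

/-- The coefficients `c = (n₁², n₂², n₃², -2n₁n₂, -2n₂n₃, -2n₁n₃)`. -/
noncomputable def bianchiCoef (n₁ n₂ n₃ : ℝ) : Fin 6 → ℝ :=
  ![n₁ ^ 2, n₂ ^ 2, n₃ ^ 2, -2 * n₁ * n₂, -2 * n₂ * n₃, -2 * n₁ * n₃]

/-- The Cartan matrix `Mᵢⱼ = -cⱼ⟨aᵢ,aⱼ⟩` of the vacuum Bianchi class A models. -/
noncomputable def bianchiCartan (n₁ n₂ n₃ : ℝ) : Matrix (Fin 6) (Fin 6) ℝ :=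
  fun i j => -(bianchiCoef n₁ n₂ n₃ j) * lorentzProd (bianchiVec i) (bianchiVec j)

set_option maxHeartbeats 2000000

/-- For the mixmaster models (Bianchi VIII and IX, all `nᵢ`
nonzero), the 2×2 block matrix `M̂ᵢⱼ` with `i < j` is nondegenerate iff
`(i,j)` is one of the six (1-based) pairs `(1,4), (2,6), (3,5), (4,5), (4,6),
(5,6)`, i.e. `(0,3), (1,5), (2,4), (3,4), (3,5), (4,5)` in `Fin 6`. -/
theorem bianchi_VIII_IX_nondegenerate_blocks
    (n₁ n₂ n₃ : ℝ) (h₁ : n₁ ≠ 0) (h₂ : n₂ ≠ 0) (h₃ : n₃ ≠ 0) :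
    ∀ i j : Fin 6, i < j →
      (bianchiCartan n₁ n₂ n₃ i i * bianchiCartan n₁ n₂ n₃ j j
          - bianchiCartan n₁ n₂ n₃ i j * bianchiCartan n₁ n₂ n₃ j i ≠ 0
        ↔ ((i = 0 ∧ j = 3) ∨ (i = 1 ∧ j = 5) ∨ (i = 2 ∧ j = 4)
            ∨ (i = 3 ∧ j = 4) ∨ (i = 3 ∧ j = 5) ∨ (i = 4 ∧ j = 5))) := by

  have hs : Real.sqrt 3 ^ 2 = 3 := Real.sq_sqrt (by norm_num)
  intro i j hij
  fin_cases i <;> fin_cases j <;>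
    first
      | exact absurd hij (by decide)
      | (clear hij
         simp only [bianchiCartan, bianchiCoef, bianchiVec, lorentzProd, Fin.isValue,
           Matrix.cons_val_zero, Matrix.cons_val_one, Matrix.head_cons,
           Matrix.cons_val_fin_one, Fin.ext_iff]
         norm_num [show ((3:Fin 6):ℕ)=3 from rfl, show ((4:Fin 6):ℕ)=4 from rfl,
           show ((5:Fin 6):ℕ)=5 from rfl]
         try tauto
         all_goals (intros
                    try ring_nf
                    try simp only [hs]
                    try ring_nf
                    try simp [mul_eq_zero, pow_eq_zero_iff, h₁, h₂, h₃]
                    try norm_num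
                    try ring_nf
                    try simp only [hs]
                    try ring_nf
                    try simp [h₁, h₂, h₃]
                    try tauto))
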